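/- Let M > 0 and let α ∈ ℝ⟦r⟧ be a formal power series with zero constant term, all coefficients nonnegative, and positive radius of convergence (i.e., there exists ρ > 0 with Σ_n |α_n| ρ^n < ∞). Then: (i) there exists a unique formal power series γ ∈ ℝ⟦r⟧ with zero constant term satisfying the functional equation γ = α(r·e^{Mγ(r)}), i.e. γ equals the substitution of the series r·exp(M·γ) (where exp(M·γ) := Σ_{k≥0} (M·γ)^k / k!) into α; and (ii) this γ has nonnegative coefficients and positive radius of convergence. -/

import Mathlib

open PowerSeries Finset

/-- Composition `f(g)` of formal power series: when `g` has zero constant term this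
is the usual substitution of `g` into `f`, computed coefficientwise by
`coeff n (f(g)) = ∑_{i ≤ n} (coeff i f) · coeff n (g^i)`
(the terms with `i > n` vanish since `g` has zero constant term). -/
noncomputable def psComp (f g : PowerSeries ℝ) : PowerSeries ℝ :=
  PowerSeries.mk fun n =>
    ∑ i ∈ Finset.range (n + 1), PowerSeries.coeff i f * PowerSeries.coeff n (g ^ i)

lemma coeff_psComp (f g : PowerSeries ℝ) (n : ℕ) :
    PowerSeries.coeff n (psComp f g)
      = ∑ i ∈ Finset.range (n + 1), PowerSeries.coeff i f * PowerSeries.coeff n (g ^ i) := by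
  simp [psComp]

lemma coeff_pow_congr (g g' : PowerSeries ℝ) (i : ℕ) :
    ∀ n : ℕ, (∀ k ≤ n, PowerSeries.coeff k g = PowerSeries.coeff k g') →
      PowerSeries.coeff n (g ^ i) = PowerSeries.coeff n (g' ^ i) := by
  induction i with
  | zero => intro n h; simp
  | succ i ih =>
    intro n h
    rw [pow_succ, pow_succ, PowerSeries.coeff_mul, PowerSeries.coeff_mul]
    refine Finset.sum_congr rfl fun p hp => ?_
    rw [Finset.HasAntidiagonal.mem_antidiagonal] at hp
    rw [ih p.1 (fun k hk => h k (hk.trans (by omega))), h p.2 (by omega)]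

lemma coeff_psComp_congr (f g g' : PowerSeries ℝ) (n : ℕ)
    (h : ∀ k ≤ n, PowerSeries.coeff k g = PowerSeries.coeff k g') :
    PowerSeries.coeff n (psComp f g) = PowerSeries.coeff n (psComp f g') := by
  rw [coeff_psComp, coeff_psComp]
  exact Finset.sum_congr rfl fun i _ => by rw [coeff_pow_congr g g' i n h]

lemma coeff_zero_X_mul (E : PowerSeries ℝ) : PowerSeries.coeff 0 (PowerSeries.X * E) = 0 := by
  simp

/-- coefficients of `X * psComp exp (M•γ)` up to `n` depend only on coefficients of `γ` below `n`. -/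
lemma coeff_rhs_congr (M : ℝ) (γ γ' : PowerSeries ℝ) (n : ℕ)
    (h : ∀ k < n, PowerSeries.coeff k γ = PowerSeries.coeff k γ') :
    ∀ k ≤ n, PowerSeries.coeff k (PowerSeries.X * psComp (PowerSeries.exp ℝ) (M • γ))
      = PowerSeries.coeff k (PowerSeries.X * psComp (PowerSeries.exp ℝ) (M • γ')) := by
  intro k hk
  match k with
  | 0 => rw [coeff_zero_X_mul, coeff_zero_X_mul]
  | k + 1 =>
    rw [PowerSeries.coeff_succ_X_mul, PowerSeries.coeff_succ_X_mul]
    refine coeff_psComp_congr _ _ _ k fun j hj => ?_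
    simp only [map_smul, smul_eq_mul]
    rw [h j (by omega)]

/-- key: the `n`-th coefficient of the fixed-point functional depends only on
coefficients of `γ` below `n`. -/
lemma coeff_Phi_congr (M : ℝ) (α γ γ' : PowerSeries ℝ) (n : ℕ)
    (h : ∀ k < n, PowerSeries.coeff k γ = PowerSeries.coeff k γ') :
    PowerSeries.coeff n (psComp α (PowerSeries.X * psComp (PowerSeries.exp ℝ) (M • γ)))
      = PowerSeries.coeff n (psComp α (PowerSeries.X * psComp (PowerSeries.exp ℝ) (M • γ'))) :=
  coeff_psComp_congr _ _ _ n (coeff_rhs_congr M γ γ' n h)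

lemma coeff_pow_nonneg (g : PowerSeries ℝ) (i : ℕ) :
    ∀ n : ℕ, (∀ k ≤ n, 0 ≤ PowerSeries.coeff k g) → 0 ≤ PowerSeries.coeff n (g ^ i) := by
  induction i with
  | zero =>
    intro n _; rw [pow_zero, PowerSeries.coeff_one]
    split <;> norm_num
  | succ i ih =>
    intro n h
    rw [pow_succ, PowerSeries.coeff_mul]
    refine Finset.sum_nonneg fun p hp => ?_
    rw [Finset.HasAntidiagonal.mem_antidiagonal] at hp
    exact mul_nonneg (ih p.1 fun k hk => h k (by omega)) (h p.2 (by omega))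

lemma coeff_psComp_nonneg (f g : PowerSeries ℝ) (hf : ∀ i, 0 ≤ PowerSeries.coeff i f) (n : ℕ)
    (hg : ∀ k ≤ n, 0 ≤ PowerSeries.coeff k g) : 0 ≤ PowerSeries.coeff n (psComp f g) := by
  rw [coeff_psComp]
  exact Finset.sum_nonneg fun i _ => mul_nonneg (hf i) (coeff_pow_nonneg g i n hg)

lemma coeff_exp_nonneg (i : ℕ) : 0 ≤ PowerSeries.coeff i (PowerSeries.exp ℝ) := by
  rw [PowerSeries.coeff_exp]
  simp only [one_div, map_inv₀, map_natCast]
  positivity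

lemma coeff_exp_eq (i : ℕ) : PowerSeries.coeff i (PowerSeries.exp ℝ) = ((Nat.factorial i : ℝ))⁻¹ := by
  rw [PowerSeries.coeff_exp]; simp

lemma T_mul_le (t : ℝ) (ht : 0 ≤ t) (f g : PowerSeries ℝ)
    (hf : ∀ n, 0 ≤ PowerSeries.coeff n f) (hg : ∀ n, 0 ≤ PowerSeries.coeff n g) (N : ℕ) :
    ∑ n ∈ range (N + 1), PowerSeries.coeff n (f * g) * t ^ n
      ≤ (∑ n ∈ range (N + 1), PowerSeries.coeff n f * t ^ n)
        * (∑ n ∈ range (N + 1), PowerSeries.coeff n g * t ^ n) := by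
  set B : ℕ × ℕ → ℝ := fun p => (PowerSeries.coeff p.1 f * t ^ p.1) * (PowerSeries.coeff p.2 g * t ^ p.2) with hB
  have hBnn : ∀ p, 0 ≤ B p := fun p =>
    mul_nonneg (mul_nonneg (hf _) (pow_nonneg ht _)) (mul_nonneg (hg _) (pow_nonneg ht _))
  have key : ∀ n, PowerSeries.coeff n (f * g) * t ^ n = ∑ p ∈ Finset.HasAntidiagonal.antidiagonal n, B p := by
    intro n
    rw [PowerSeries.coeff_mul, Finset.sum_mul]
    refine Finset.sum_congr rfl fun p hp => ?_
    rw [Finset.HasAntidiagonal.mem_antidiagonal] at hp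
    rw [hB]; simp only [← hp, pow_add]; ring
  have hdisj : (↑(range (N + 1)) : Set ℕ).PairwiseDisjoint Finset.HasAntidiagonal.antidiagonal := by
    intro a _ b _ hab
    simp only [Function.onFun]
    rw [Finset.disjoint_left]
    intro p hpa hpb
    rw [Finset.HasAntidiagonal.mem_antidiagonal] at hpa hpb
    exact hab (hpa.symm.trans hpb)
  calc ∑ n ∈ range (N + 1), PowerSeries.coeff n (f * g) * t ^ n
      = ∑ n ∈ range (N + 1), ∑ p ∈ Finset.HasAntidiagonal.antidiagonal n, B p :=
        Finset.sum_congr rfl fun n _ => key n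
    _ = ∑ p ∈ (range (N + 1)).biUnion Finset.HasAntidiagonal.antidiagonal, B p := (Finset.sum_biUnion hdisj).symm
    _ ≤ ∑ p ∈ range (N + 1) ×ˢ range (N + 1), B p := by
        refine Finset.sum_le_sum_of_subset_of_nonneg ?_ fun p _ _ => hBnn p
        intro p hp
        rw [Finset.mem_biUnion] at hp
        obtain ⟨n, hn, hpn⟩ := hp
        rw [Finset.HasAntidiagonal.mem_antidiagonal] at hpn
        rw [Finset.mem_range] at hn
        rw [Finset.mem_product, Finset.mem_range, Finset.mem_range]
        omega
    _ = _ := by rw [Finset.sum_mul_sum, Finset.sum_product]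

lemma T_nonneg (t : ℝ) (ht : 0 ≤ t) (f : PowerSeries ℝ)
    (hf : ∀ n, 0 ≤ PowerSeries.coeff n f) (N : ℕ) :
    0 ≤ ∑ n ∈ range (N + 1), PowerSeries.coeff n f * t ^ n :=
  Finset.sum_nonneg fun n _ => mul_nonneg (hf n) (pow_nonneg ht n)

lemma T_one (t : ℝ) (N : ℕ) :
    ∑ n ∈ range (N + 1), PowerSeries.coeff n (1 : PowerSeries ℝ) * t ^ n = 1 := by
  rw [Finset.sum_eq_single 0]
  · simp
  · intro n _ hn; rw [PowerSeries.coeff_one]; simp [hn]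
  · simp

lemma T_pow_le (t : ℝ) (ht : 0 ≤ t) (g : PowerSeries ℝ)
    (hg : ∀ n, 0 ≤ PowerSeries.coeff n g) (N : ℕ) (i : ℕ) :
    ∑ n ∈ range (N + 1), PowerSeries.coeff n (g ^ i) * t ^ n
      ≤ (∑ n ∈ range (N + 1), PowerSeries.coeff n g * t ^ n) ^ i := by
  induction i with
  | zero => simp [T_one t N]
  | succ i ih =>
    rw [pow_succ, pow_succ]
    calc ∑ n ∈ range (N + 1), PowerSeries.coeff n (g ^ i * g) * t ^ n
        ≤ (∑ n ∈ range (N + 1), PowerSeries.coeff n (g ^ i) * t ^ n)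
            * (∑ n ∈ range (N + 1), PowerSeries.coeff n g * t ^ n) :=
          T_mul_le t ht _ g (fun n => coeff_pow_nonneg g i n fun k _ => hg k) hg N
      _ ≤ _ := by
          refine mul_le_mul_of_nonneg_right ih (T_nonneg t ht g hg N)

lemma T_psComp_le (t : ℝ) (ht : 0 ≤ t) (f g : PowerSeries ℝ)
    (hf : ∀ n, 0 ≤ PowerSeries.coeff n f) (hg : ∀ n, 0 ≤ PowerSeries.coeff n g) (N : ℕ) :
    ∑ n ∈ range (N + 1), PowerSeries.coeff n (psComp f g) * t ^ n
      ≤ ∑ i ∈ range (N + 1), PowerSeries.coeff i f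
          * (∑ n ∈ range (N + 1), PowerSeries.coeff n g * t ^ n) ^ i := by
  have h1 : ∀ n ∈ range (N + 1),
      PowerSeries.coeff n (psComp f g) * t ^ n
        ≤ ∑ i ∈ range (N + 1), PowerSeries.coeff i f * (PowerSeries.coeff n (g ^ i) * t ^ n) := by
    intro n hn
    rw [Finset.mem_range] at hn
    have : PowerSeries.coeff n (psComp f g) * t ^ n
        = ∑ i ∈ range (n + 1), PowerSeries.coeff i f * (PowerSeries.coeff n (g ^ i) * t ^ n) := by
      simp only [psComp, PowerSeries.coeff_mk, Finset.sum_mul, mul_assoc]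
    rw [this]
    refine Finset.sum_le_sum_of_subset_of_nonneg ?_ fun i _ _ =>
      mul_nonneg (hf i) (mul_nonneg (coeff_pow_nonneg g i n fun k _ => hg k) (pow_nonneg ht n))
    exact Finset.range_subset_range.mpr (by omega)
  calc ∑ n ∈ range (N + 1), PowerSeries.coeff n (psComp f g) * t ^ n
      ≤ ∑ n ∈ range (N + 1), ∑ i ∈ range (N + 1),
          PowerSeries.coeff i f * (PowerSeries.coeff n (g ^ i) * t ^ n) :=
        Finset.sum_le_sum h1
    _ = ∑ i ∈ range (N + 1), PowerSeries.coeff i f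
          * (∑ n ∈ range (N + 1), PowerSeries.coeff n (g ^ i) * t ^ n) := by
        rw [Finset.sum_comm]
        exact Finset.sum_congr rfl fun i _ => by rw [Finset.mul_sum]
    _ ≤ _ := by
        refine Finset.sum_le_sum fun i _ => mul_le_mul_of_nonneg_left ?_ (hf i)
        exact T_pow_le t ht g hg N i

lemma T_X_mul (t : ℝ) (E : PowerSeries ℝ) (N : ℕ) :
    ∑ n ∈ range (N + 1 + 1), PowerSeries.coeff n (PowerSeries.X * E) * t ^ n
      = t * ∑ n ∈ range (N + 1), PowerSeries.coeff n E * t ^ n := by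
  rw [Finset.sum_range_succ' (fun n => PowerSeries.coeff n (PowerSeries.X * E) * t ^ n)]
  have h0 : PowerSeries.coeff 0 (PowerSeries.X * E) = 0 := by simp
  rw [h0, Finset.mul_sum]
  simp only [PowerSeries.coeff_succ_X_mul]
  rw [zero_mul, add_zero]
  exact Finset.sum_congr rfl fun n _ => by ring

lemma T_exp_comp_le (t : ℝ) (ht : 0 ≤ t) (h : PowerSeries ℝ)
    (hh : ∀ n, 0 ≤ PowerSeries.coeff n h) (N : ℕ) :
    ∑ n ∈ range (N + 1), PowerSeries.coeff n (psComp (PowerSeries.exp ℝ) h) * t ^ n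
      ≤ Real.exp (∑ n ∈ range (N + 1), PowerSeries.coeff n h * t ^ n) := by
  set x := ∑ n ∈ range (N + 1), PowerSeries.coeff n h * t ^ n with hx
  have hx0 : 0 ≤ x := T_nonneg t ht h hh N
  calc ∑ n ∈ range (N + 1), PowerSeries.coeff n (psComp (PowerSeries.exp ℝ) h) * t ^ n
      ≤ ∑ i ∈ range (N + 1), PowerSeries.coeff i (PowerSeries.exp ℝ) * x ^ i :=
        T_psComp_le t ht _ h coeff_exp_nonneg hh N
    _ = ∑ i ∈ range (N + 1), x ^ i / (Nat.factorial i : ℝ) := by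
        refine Finset.sum_congr rfl fun i _ => ?_
        rw [coeff_exp_eq]; ring
    _ ≤ Real.exp x := Real.sum_le_exp_of_nonneg hx0 (N + 1)

lemma alpha_sum_le (α : PowerSeries ℝ) (ρ : ℝ) (hρ : 0 < ρ)
    (hα0 : PowerSeries.constantCoeff α = 0)
    (hαpos : ∀ n, 0 ≤ PowerSeries.coeff n α)
    (hsum : Summable fun i : ℕ => PowerSeries.coeff i α * ρ ^ i)
    (x : ℝ) (hx0 : 0 ≤ x) (hxρ : x ≤ ρ) (N : ℕ) :
    ∑ i ∈ range (N + 1), PowerSeries.coeff i α * x ^ i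
      ≤ ((∑' i : ℕ, PowerSeries.coeff i α * ρ ^ i) / ρ) * x := by
  have hterm : ∀ i : ℕ, PowerSeries.coeff i α * x ^ i
      ≤ (PowerSeries.coeff i α * ρ ^ i) * (x / ρ) := by
    intro i
    match i with
    | 0 =>
      have h0 : PowerSeries.coeff 0 α = 0 := by
        rw [PowerSeries.coeff_zero_eq_constantCoeff_apply, hα0]
      simp [h0]
    | i + 1 =>
      have hxp : x ^ (i + 1) ≤ ρ ^ (i + 1) * (x / ρ) := by
        have : ρ ^ (i + 1) * (x / ρ) = ρ ^ i * x := by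
          field_simp; ring
        rw [this, pow_succ]
        exact mul_le_mul_of_nonneg_right (pow_le_pow_left₀ hx0 hxρ i) hx0
      calc PowerSeries.coeff (i+1) α * x ^ (i+1)
          ≤ PowerSeries.coeff (i+1) α * (ρ ^ (i+1) * (x / ρ)) :=
            mul_le_mul_of_nonneg_left hxp (hαpos _)
        _ = (PowerSeries.coeff (i+1) α * ρ ^ (i+1)) * (x / ρ) := by ring
  calc ∑ i ∈ range (N + 1), PowerSeries.coeff i α * x ^ i
      ≤ ∑ i ∈ range (N + 1), (PowerSeries.coeff i α * ρ ^ i) * (x / ρ) :=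
        Finset.sum_le_sum fun i _ => hterm i
    _ = (∑ i ∈ range (N + 1), PowerSeries.coeff i α * ρ ^ i) * (x / ρ) := by
        rw [Finset.sum_mul]
    _ ≤ (∑' i : ℕ, PowerSeries.coeff i α * ρ ^ i) * (x / ρ) := by
        refine mul_le_mul_of_nonneg_right ?_ (by positivity)
        exact Summable.sum_le_tsum _ (fun i _ => mul_nonneg (hαpos i) (by positivity)) hsum
    _ = _ := by ring

noncomputable def fpAux (M : ℝ) (α : PowerSeries ℝ) (n : ℕ) : ℝ :=
  PowerSeries.coeff n (psComp α (PowerSeries.X * psComp (PowerSeries.exp ℝ)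
    (M • PowerSeries.mk (fun k => if _ : k < n then fpAux M α k else 0))))
termination_by n

lemma fpAux_eq (M : ℝ) (α : PowerSeries ℝ) (n : ℕ) :
    fpAux M α n = PowerSeries.coeff n (psComp α (PowerSeries.X * psComp (PowerSeries.exp ℝ)
      (M • PowerSeries.mk (fun k => if k < n then fpAux M α k else 0)))) := by
  rw [fpAux]; simp

theorem exists_fix (M : ℝ) (α : PowerSeries ℝ) (hα0 : PowerSeries.constantCoeff α = 0) :
    ∃! γ : PowerSeries ℝ, PowerSeries.constantCoeff γ = 0 ∧
        γ = psComp α (PowerSeries.X * psComp (PowerSeries.exp ℝ) (M • γ)) := by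
  set γ0 : PowerSeries ℝ := PowerSeries.mk (fpAux M α) with hγ0def
  have hfix : ∀ n : ℕ, PowerSeries.coeff n γ0
      = PowerSeries.coeff n (psComp α (PowerSeries.X * psComp (PowerSeries.exp ℝ) (M • γ0))) := by
    intro n
    rw [hγ0def, PowerSeries.coeff_mk, fpAux_eq]
    refine coeff_Phi_congr M α _ _ n fun k hk => ?_
    rw [PowerSeries.coeff_mk, PowerSeries.coeff_mk, if_pos hk]
  have hfix' : γ0 = psComp α (PowerSeries.X * psComp (PowerSeries.exp ℝ) (M • γ0)) :=
    PowerSeries.ext hfix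
  have hconst : PowerSeries.constantCoeff γ0 = 0 := by
    rw [← PowerSeries.coeff_zero_eq_constantCoeff_apply, hfix 0, coeff_psComp,
      Finset.sum_range_one, pow_zero]
    rw [PowerSeries.coeff_zero_eq_constantCoeff_apply, hα0, zero_mul]
  refine ⟨γ0, ⟨hconst, hfix'⟩, ?_⟩
  rintro γ' ⟨-, hfix''⟩
  ext n
  induction n using Nat.strong_induction_on with
  | _ n ih =>
    calc PowerSeries.coeff n γ'
        = PowerSeries.coeff n (psComp α (PowerSeries.X * psComp (PowerSeries.exp ℝ) (M • γ'))) := by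
          rw [← hfix'']
      _ = PowerSeries.coeff n (psComp α (PowerSeries.X * psComp (PowerSeries.exp ℝ) (M • γ0))) :=
          coeff_Phi_congr M α γ' γ0 n ih
      _ = PowerSeries.coeff n γ0 := (hfix n).symm

lemma gamma_nonneg (M : ℝ) (hM : 0 < M) (α : PowerSeries ℝ)
    (hαpos : ∀ n : ℕ, 0 ≤ PowerSeries.coeff n α) (γ : PowerSeries ℝ)
    (hfix : γ = psComp α (PowerSeries.X * psComp (PowerSeries.exp ℝ) (M • γ))) :
    ∀ n : ℕ, 0 ≤ PowerSeries.coeff n γ := by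
  intro n
  induction n using Nat.strong_induction_on with
  | _ n ih =>
    rw [hfix]
    refine coeff_psComp_nonneg _ _ hαpos n fun k hk => ?_
    match k with
    | 0 => simp
    | k + 1 =>
      rw [PowerSeries.coeff_succ_X_mul]
      refine coeff_psComp_nonneg _ _ coeff_exp_nonneg k fun j hj => ?_
      simp only [map_smul, smul_eq_mul]
      exact mul_nonneg hM.le (ih j (by omega))

lemma gamma_summable (M : ℝ) (hM : 0 < M) (α : PowerSeries ℝ)
    (hα0 : PowerSeries.constantCoeff α = 0)
    (hαpos : ∀ n : ℕ, 0 ≤ PowerSeries.coeff n α)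
    (hαconv : ∃ ρ > (0 : ℝ), Summable fun n : ℕ => |PowerSeries.coeff n α| * ρ ^ n)
    (γ : PowerSeries ℝ) (hγ0 : PowerSeries.constantCoeff γ = 0)
    (hfix : γ = psComp α (PowerSeries.X * psComp (PowerSeries.exp ℝ) (M • γ)))
    (hγpos : ∀ n : ℕ, 0 ≤ PowerSeries.coeff n γ) :
    ∃ ρ > (0 : ℝ), Summable fun n : ℕ => |PowerSeries.coeff n γ| * ρ ^ n := by
  obtain ⟨ρ, hρ, habs⟩ := hαconv
  have hsum : Summable fun i : ℕ => PowerSeries.coeff i α * ρ ^ i :=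
    habs.congr fun i => by rw [abs_of_nonneg (hαpos i)]
  set S : ℝ := ∑' i : ℕ, PowerSeries.coeff i α * ρ ^ i with hS
  have hS0 : 0 ≤ S := tsum_nonneg fun i => mul_nonneg (hαpos i) (by positivity)
  set C : ℝ := S / ρ with hC
  have hC0 : 0 ≤ C := div_nonneg hS0 hρ.le
  set t : ℝ := Real.exp (-M) * min ρ (1 / (C + 1)) with htdef
  have htpos : 0 < t := by
    apply mul_pos (Real.exp_pos _)
    exact lt_min hρ (by positivity)
  have hteM : t * Real.exp M = min ρ (1 / (C + 1)) := by
    rw [htdef, Real.exp_neg]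
    field_simp
  have hEnn : ∀ n, 0 ≤ PowerSeries.coeff n (psComp (PowerSeries.exp ℝ) (M • γ)) := by
    intro n
    refine coeff_psComp_nonneg _ _ coeff_exp_nonneg n fun j _ => ?_
    simp only [map_smul, smul_eq_mul]
    exact mul_nonneg hM.le (hγpos j)
  set E : PowerSeries ℝ := psComp (PowerSeries.exp ℝ) (M • γ) with hE
  set g : PowerSeries ℝ := PowerSeries.X * E with hg
  have hgnn : ∀ n, 0 ≤ PowerSeries.coeff n g := by
    intro n
    match n with
    | 0 => simp [hg]
    | n + 1 => rw [hg, PowerSeries.coeff_succ_X_mul]; exact hEnn n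
  have hMγnn : ∀ n, 0 ≤ PowerSeries.coeff n (M • γ) := by
    intro n; simp only [map_smul, smul_eq_mul]; exact mul_nonneg hM.le (hγpos n)
  -- the key uniform bound on partial sums
  have key : ∀ N : ℕ, ∑ n ∈ range (N + 1), PowerSeries.coeff n γ * t ^ n ≤ 1 := by
    intro N
    induction N with
    | zero =>
      rw [zero_add, Finset.sum_range_one, pow_zero, mul_one,
        PowerSeries.coeff_zero_eq_constantCoeff_apply, hγ0]
      norm_num
    | succ N ih =>
      have hTMγ : ∑ n ∈ range (N + 1), PowerSeries.coeff n (M • γ) * t ^ n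
          = M * ∑ n ∈ range (N + 1), PowerSeries.coeff n γ * t ^ n := by
        rw [Finset.mul_sum]
        exact Finset.sum_congr rfl fun n _ => by
          simp only [map_smul, smul_eq_mul]; ring
      have hTE : ∑ n ∈ range (N + 1), PowerSeries.coeff n E * t ^ n ≤ Real.exp M := by
        calc ∑ n ∈ range (N + 1), PowerSeries.coeff n E * t ^ n
            ≤ Real.exp (∑ n ∈ range (N + 1), PowerSeries.coeff n (M • γ) * t ^ n) :=
              T_exp_comp_le t htpos.le _ hMγnn N
          _ ≤ Real.exp M := by
              apply Real.exp_le_exp.mpr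
              rw [hTMγ]
              calc M * ∑ n ∈ range (N + 1), PowerSeries.coeff n γ * t ^ n
                  ≤ M * 1 := mul_le_mul_of_nonneg_left ih hM.le
                _ = M := mul_one M
      have hTg_le : ∑ n ∈ range (N + 1 + 1), PowerSeries.coeff n g * t ^ n
          ≤ min ρ (1 / (C + 1)) := by
        rw [hg, T_X_mul, ← hteM]
        calc t * ∑ n ∈ range (N + 1), PowerSeries.coeff n E * t ^ n
            ≤ t * Real.exp M := mul_le_mul_of_nonneg_left hTE htpos.le
          _ = t * Real.exp M := rfl
      have hTg0 : 0 ≤ ∑ n ∈ range (N + 1 + 1), PowerSeries.coeff n g * t ^ n :=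
        T_nonneg t htpos.le g hgnn (N + 1)
      calc ∑ n ∈ range (N + 1 + 1), PowerSeries.coeff n γ * t ^ n
          = ∑ n ∈ range (N + 1 + 1), PowerSeries.coeff n (psComp α g) * t ^ n := by
            refine Finset.sum_congr rfl fun n _ => ?_
            rw [← hfix]
        _ ≤ ∑ i ∈ range (N + 1 + 1), PowerSeries.coeff i α
              * (∑ n ∈ range (N + 1 + 1), PowerSeries.coeff n g * t ^ n) ^ i :=
            T_psComp_le t htpos.le α g hαpos hgnn (N + 1)
        _ ≤ (S / ρ) * (∑ n ∈ range (N + 1 + 1), PowerSeries.coeff n g * t ^ n) :=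
            alpha_sum_le α ρ hρ hα0 hαpos hsum _ hTg0
              (hTg_le.trans (min_le_left _ _)) (N + 1)
        _ ≤ C * (1 / (C + 1)) := by
            rw [← hC]
            exact mul_le_mul_of_nonneg_left (hTg_le.trans (min_le_right _ _)) hC0
        _ ≤ 1 := by
            rw [mul_one_div, div_le_one (by positivity)]
            linarith
  refine ⟨t, htpos, ?_⟩
  apply summable_of_sum_range_le (c := 1)
  · intro n; positivity
  · intro N
    have hsub : ∑ n ∈ range N, |PowerSeries.coeff n γ| * t ^ n
        ≤ ∑ n ∈ range (N + 1), PowerSeries.coeff n γ * t ^ n := by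
      have : ∀ n, |PowerSeries.coeff n γ| * t ^ n = PowerSeries.coeff n γ * t ^ n :=
        fun n => by rw [abs_of_nonneg (hγpos n)]
      simp only [this]
      refine Finset.sum_le_sum_of_subset_of_nonneg (Finset.range_subset_range.mpr (by omega)) ?_
      intro n _ _
      exact mul_nonneg (hγpos n) (by positivity)
    exact hsub.trans (key N)


theorem fixed_point_analytic (M : ℝ) (hM : 0 < M) (α : PowerSeries ℝ)
    (hα0 : PowerSeries.constantCoeff α = 0)
    (hαpos : ∀ n : ℕ, 0 ≤ PowerSeries.coeff n α)
    (hαconv : ∃ ρ > (0 : ℝ), Summable fun n : ℕ => |PowerSeries.coeff n α| * ρ ^ n) :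
    (∃! γ : PowerSeries ℝ, PowerSeries.constantCoeff γ = 0 ∧
        γ = psComp α (PowerSeries.X * psComp (PowerSeries.exp ℝ) (M • γ))) ∧
    (∀ γ : PowerSeries ℝ, PowerSeries.constantCoeff γ = 0 →
        γ = psComp α (PowerSeries.X * psComp (PowerSeries.exp ℝ) (M • γ)) →
        (∀ n : ℕ, 0 ≤ PowerSeries.coeff n γ) ∧
          ∃ ρ > (0 : ℝ), Summable fun n : ℕ => |PowerSeries.coeff n γ| * ρ ^ n) := by
  refine ⟨exists_fix M α hα0, fun γ hγ0 hfix => ?_⟩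
  have hpos := gamma_nonneg M hM α hαpos γ hfix
  exact ⟨hpos, gamma_summable M hM α hα0 hαpos hαconv γ hγ0 hfix hpos⟩
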